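/- Let T > 0, κ_a > 0, κ_n > 0, α_a, α_n ∈ ℝ, ϕ > 0. Suppose φ̄, ζ̄ : [0,T] → ℝ are differentiable functions satisfying, for all t ∈ [0,T], φ̄'(t) − (1/(2κ_a)) φ̄(t)² − (1/(2κ_n)) ζ̄(t) φ̄(t) + (α_a/(2κ_a)) φ̄(t) + (α_n/(2κ_n)) ζ̄(t) + 2ϕ = 0 and ζ̄'(t) − (1/(2κ_n)) ζ̄(t)² − (1/(2κ_a)) ζ̄(t) φ̄(t) + (α_n/(2κ_n)) ζ̄(t) + (α_a/(2κ_a)) φ̄(t) + 2ϕ = 0, together with the equal terminal conditions φ̄(T) = ζ̄(T). Then φ̄(t) = ζ̄(t) for all t ∈ [0,T]. -/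

import Mathlib

open Real Set Filter Topology

/-- Symmetry of the coupled Riccati system: two differentiable solutions of the
coupled Riccati terminal value system with equal terminal conditions coincide
on `[0,T]`. -/
theorem coupled_riccati_symmetry
    (T κa κn αa αn ϕ : ℝ) (hT : 0 < T) (hκa : 0 < κa) (hκn : 0 < κn) (hϕ : 0 < ϕ)
    (φ ζ : ℝ → ℝ)
    (hφ : ∀ t ∈ Set.Icc (0 : ℝ) T,
      HasDerivWithinAt φ
        (1 / (2 * κa) * (φ t) ^ 2 + 1 / (2 * κn) * (ζ t * φ t)
          - αa / (2 * κa) * φ t - αn / (2 * κn) * ζ t - 2 * ϕ)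
        (Set.Icc (0 : ℝ) T) t)
    (hζ : ∀ t ∈ Set.Icc (0 : ℝ) T,
      HasDerivWithinAt ζ
        (1 / (2 * κn) * (ζ t) ^ 2 + 1 / (2 * κa) * (ζ t * φ t)
          - αn / (2 * κn) * ζ t - αa / (2 * κa) * φ t - 2 * ϕ)
        (Set.Icc (0 : ℝ) T) t)
    (hterm : φ T = ζ T) :
    ∀ t ∈ Set.Icc (0 : ℝ) T, φ t = ζ t := by
  -- the difference u = φ - ζ satisfies u' = c t * u with c t = φ t/(2κa) + ζ t/(2κn)
  set c : ℝ → ℝ := fun t => 1 / (2 * κa) * φ t + 1 / (2 * κn) * ζ t with hc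
  set u : ℝ → ℝ := fun t => φ t - ζ t with hu
  -- continuity of φ, ζ on Icc
  have hφc : ContinuousOn φ (Set.Icc (0 : ℝ) T) := fun t ht =>
    (hφ t ht).continuousWithinAt
  have hζc : ContinuousOn ζ (Set.Icc (0 : ℝ) T) := fun t ht =>
    (hζ t ht).continuousWithinAt
  have hcc : ContinuousOn c (Set.Icc (0 : ℝ) T) := by
    exact (continuousOn_const.mul hφc).add (continuousOn_const.mul hζc)
  -- bound on c
  obtain ⟨C, hC⟩ := (isCompact_Icc : IsCompact (Set.Icc (0 : ℝ) T)).exists_bound_of_continuousOn hcc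
  -- clamp to the interval
  set p : ℝ → ℝ := fun t => max 0 (min t T) with hp
  have hpmem : ∀ t, p t ∈ Set.Icc (0 : ℝ) T := fun t =>
    ⟨le_max_left _ _, max_le (le_of_lt hT) (min_le_right _ _)⟩
  have hpid : ∀ t ∈ Set.Icc (0 : ℝ) T, p t = t := by
    intro t ht
    simp [hp, min_eq_left ht.2, max_eq_right ht.1]
  set v : ℝ → ℝ → ℝ := fun t x => c (p t) * x with hv
  have hK : ∀ t, LipschitzOnWith C.toNNReal (v t) Set.univ := by
    intro t
    apply LipschitzOnWith.of_dist_le_mul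
    intro x _ y _
    simp only [hv, Real.dist_eq]
    rw [← mul_sub, abs_mul]
    have h1 : |c (p t)| ≤ (C.toNNReal : ℝ) := le_trans (hC _ (hpmem t)) (Real.le_coe_toNNReal C)
    exact mul_le_mul_of_nonneg_right h1 (abs_nonneg _)
  have hu' : ∀ t ∈ Set.Ioc (0 : ℝ) T, HasDerivWithinAt u (v t (u t)) (Set.Iic t) t := by
    intro t ht
    have htm : t ∈ Set.Icc (0 : ℝ) T := ⟨le_of_lt ht.1, ht.2⟩
    have h1 := (hφ t htm).sub (hζ t htm)
    have h2 : HasDerivWithinAt u (v t (u t)) (Set.Icc (0 : ℝ) T) t := by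
      convert h1 using 1
      show c (p t) * u t = _
      rw [hpid t htm]
      simp only [hc, hu]
      ring
      all_goals rfl
    apply h2.mono_of_mem_nhdsWithin
    have : Set.Ioc (0 : ℝ) t ∈ 𝓝[Set.Iic t] t := by
      rw [← Ioi_inter_Iic]
      exact Filter.inter_mem (mem_nhdsWithin_of_mem_nhds (Ioi_mem_nhds ht.1)) self_mem_nhdsWithin
    exact Filter.mem_of_superset this (fun x hx => ⟨le_of_lt hx.1, hx.2.trans ht.2⟩)
  have hz' : ∀ t ∈ Set.Ioc (0 : ℝ) T,
      HasDerivWithinAt (fun _ : ℝ => (0 : ℝ)) (v t 0) (Set.Iic t) t := by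
    intro t _
    have : v t 0 = 0 := by simp [hv]
    rw [this]
    exact hasDerivWithinAt_const _ _ _
  have huT : u T = (fun _ : ℝ => (0 : ℝ)) T := by simp [hu, hterm]
  have key : Set.EqOn u (fun _ : ℝ => (0 : ℝ)) (Set.Icc (0 : ℝ) T) :=
    ODE_solution_unique_of_mem_Icc_left (s := fun _ => Set.univ) (fun t _ => hK t)
      (fun t ht => ((hφ t ht).sub (hζ t ht)).continuousWithinAt)
      hu' (fun _ _ => trivial)
      continuousOn_const hz' (fun _ _ => trivial) huT
  intro t ht
  have := key ht
  simpa [hu, sub_eq_zero] using this
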